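/- Every commutative associative bilinear multiplication · on the Virasoro algebra Vir satisfying the compatibility condition 2 z·[x,y] = [z·x, y] + [x, z·y] for all x, y, z ∈ Vir is identically zero; i.e., there are no non-trivial transposed Poisson algebra structures on the Virasoro algebra. -/

import Mathlib

/-- The underlying space of the Virasoro algebra, with basis
`L n = single (some n) 1` for `n : ℤ` and central charge `c = single none 1`. -/
abbrev Vir : Type := Option ℤ →₀ ℂ

/-- The Virasoro bracket on basis elements:
`[L m, L n] = (m-n) L (m+n) + ((m³-m)/12) δ_{m+n,0} c`, and `c` is central. -/
noncomputable def virBasic : Option ℤ → Option ℤ → Vir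
  | some m, some n =>
      ((m : ℂ) - (n : ℂ)) • Finsupp.single (some (m + n)) (1 : ℂ) +
      (if m + n = 0 then (((m : ℂ) ^ 3 - (m : ℂ)) / 12) else 0) •
        Finsupp.single (none : Option ℤ) (1 : ℂ)
  | _, _ => 0

/-- The Virasoro Lie bracket, extended bilinearly from basis elements. -/
noncomputable def virBracket (f g : Vir) : Vir :=
  f.sum fun p c => g.sum fun q d => (c * d) • virBasic p q

noncomputable def Lb (n : ℤ) : Vir := Finsupp.single (some n) 1
noncomputable def Cb : Vir := Finsupp.single none 1

lemma virBasic_none_right (p : Option ℤ) : virBasic p none = 0 := by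
  cases p <;> rfl

lemma virBasic_none_left (q : Option ℤ) : virBasic none q = 0 := by
  cases q <;> rfl

lemma sum_single_support (f : Vir) (q₀ : Option ℤ) (h : Option ℤ → ℂ → ℂ)
    (h0 : h q₀ 0 = 0) (hne : ∀ q d, q ≠ q₀ → h q d = 0) : f.sum h = h q₀ (f q₀) := by
  classical
  rw [Finsupp.sum]
  by_cases hq : q₀ ∈ f.support
  · rw [Finset.sum_eq_single q₀ (fun b _ hb => hne b _ hb)
      (fun h' => absurd hq h')]
  · rw [Finset.sum_eq_single q₀ (fun b _ hb => hne b _ hb) (fun _ => by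
      rw [Finsupp.notMem_support_iff.mp hq, h0])]

lemma virBracket_single_left (m : ℤ) (f : Vir) :
    virBracket (Lb m) f = f.sum fun q d => d • virBasic (some m) q := by
  rw [virBracket, Lb, Finsupp.sum_single_index]
  · simp only [one_mul]
  · simp

lemma virBracket_single_right (n : ℤ) (f : Vir) :
    virBracket f (Lb n) = f.sum fun p c => c • virBasic p (some n) := by
  rw [virBracket]
  congr 1
  ext p c
  rw [Lb, Finsupp.sum_single_index] <;> simp

lemma brl_some (mm k : ℤ) (f : Vir) :
    (virBracket (Lb mm) f) (some k) = (2*(mm:ℂ) - k) * f (some (k - mm)) := by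
  rw [virBracket_single_left, Finsupp.sum_apply]
  rw [sum_single_support f (some (k - mm))
    (fun q d => (d • virBasic (some mm) q) (some k))]
  · simp only [virBasic, Finsupp.smul_apply, Finsupp.add_apply, Finsupp.single_apply]
    norm_num
    push_cast
    ring
  · simp
  · intro q d hq
    cases q with
    | none => simp [virBasic_none_right]
    | some j =>
      simp only [virBasic, Finsupp.smul_apply, Finsupp.add_apply, Finsupp.single_apply]
      have hj : j ≠ k - mm := by simpa using hq
      have h1 : ¬ (some (mm + j) = some k) := by simp; omega
      simp [h1]

lemma brl_none (mm : ℤ) (f : Vir) :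
    (virBracket (Lb mm) f) none = ((mm:ℂ)^3 - mm)/12 * f (some (-mm)) := by
  rw [virBracket_single_left, Finsupp.sum_apply]
  rw [sum_single_support f (some (-mm))
    (fun q d => (d • virBasic (some mm) q) none)]
  · simp only [virBasic, Finsupp.smul_apply, Finsupp.add_apply, Finsupp.single_apply,
      smul_eq_mul, reduceCtorEq, if_false, mul_zero, zero_add]
    rw [if_pos (by omega : mm + -mm = 0)]
    simp only [if_true]
    ring
  · simp
  · intro q d hq
    cases q with
    | none => simp [virBasic_none_right]
    | some j =>
      simp only [virBasic, Finsupp.smul_apply, Finsupp.add_apply, Finsupp.single_apply]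
      have hj : j ≠ -mm := by simpa using hq
      have h1 : ¬ (mm + j = 0) := by omega
      simp [h1]

lemma brr_some (n k : ℤ) (f : Vir) :
    (virBracket f (Lb n)) (some k) = ((k:ℂ) - 2*n) * f (some (k - n)) := by
  rw [virBracket_single_right, Finsupp.sum_apply]
  rw [sum_single_support f (some (k - n))
    (fun p c => (c • virBasic p (some n)) (some k))]
  · simp only [virBasic, Finsupp.smul_apply, Finsupp.add_apply, Finsupp.single_apply,
      smul_eq_mul, Option.some.injEq, reduceCtorEq, if_false, mul_zero, add_zero]
    rw [if_pos (by omega : k - n + n = k)]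
    push_cast
    ring
  · simp
  · intro q d hq
    cases q with
    | none => simp [virBasic_none_left]
    | some j =>
      simp only [virBasic, Finsupp.smul_apply, Finsupp.add_apply, Finsupp.single_apply]
      have hj : j ≠ k - n := by simpa using hq
      have h1 : ¬ (some (j + n) = some k) := by simp; omega
      simp [h1]

lemma brr_none (n : ℤ) (f : Vir) :
    (virBracket f (Lb n)) none = ((n:ℂ) - (n:ℂ)^3)/12 * f (some (-n)) := by
  rw [virBracket_single_right, Finsupp.sum_apply]
  rw [sum_single_support f (some (-n))
    (fun p c => (c • virBasic p (some n)) none)]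
  · simp only [virBasic, Finsupp.smul_apply, Finsupp.add_apply, Finsupp.single_apply,
      smul_eq_mul, reduceCtorEq, if_false, mul_zero, zero_add]
    rw [if_pos (by omega : -n + n = 0)]
    simp only [if_true]
    push_cast
    ring
  · simp
  · intro q d hq
    cases q with
    | none => simp [virBasic_none_left]
    | some j =>
      simp only [virBasic, Finsupp.smul_apply, Finsupp.add_apply, Finsupp.single_apply]
      have hj : j ≠ -n := by simpa using hq
      have h1 : ¬ (j + n = 0) := by omega
      simp [h1]

lemma br_noneR (f : Vir) : virBracket f Cb = 0 := by
  rw [virBracket, Cb]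
  rw [Finsupp.sum]
  apply Finset.sum_eq_zero
  intro p _
  rw [Finsupp.sum_single_index] <;> simp [virBasic_none_right]

lemma br_LL (mm n : ℤ) : virBracket (Lb mm) (Lb n) =
    ((mm:ℂ) - n) • Lb (mm + n) +
    (if mm + n = 0 then ((mm:ℂ)^3 - mm)/12 else 0) • Cb := by
  rw [virBracket_single_left, Lb, Finsupp.sum_single_index]
  · simp [virBasic, Lb, Cb]
  · simp

section HalfDeriv

variable (D : Vir →ₗ[ℂ] Vir)
  (hD : ∀ x y : Vir, (2:ℂ) • D (virBracket x y) = virBracket (D x) y + virBracket x (D y))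

/-- coefficient of `D (L n)` at `L k` -/
noncomputable def Av (n k : ℤ) : ℂ := D (Lb n) (some k)
/-- coefficient of `D (L n)` at `c` -/
noncomputable def Bv (n : ℤ) : ℂ := D (Lb n) none
/-- coefficient of `D c` at `L k` -/
noncomputable def Uv (k : ℤ) : ℂ := D Cb (some k)
/-- coefficient of `D c` at `c` -/
noncomputable def Vv : ℂ := D Cb none

lemma hbrC (mm : ℤ) : virBracket (Lb mm) Cb = 0 := by
  apply Finsupp.ext; intro p
  cases p with
  | none => rw [brl_none]; simp [Cb, Finsupp.single_apply]
  | some k => rw [brl_some]; simp [Cb, Finsupp.single_apply]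

include hD in
lemma hDC (mm : ℤ) : virBracket (Lb mm) (D Cb) = 0 := by
  have h := hD (Lb mm) Cb
  rw [hbrC mm, br_noneR, map_zero, smul_zero, zero_add] at h
  exact h.symm

include hD in
lemma hU (k : ℤ) : Uv D k = 0 := by
  have h := DFunLike.congr_fun (hDC D hD (k+1)) (some (2*k+1))
  rw [brl_some] at h
  rw [show 2*k+1 - (k+1) = k from by ring] at h
  push_cast at h
  simp only [Finsupp.coe_zero, Pi.zero_apply] at h
  show D Cb (some k) = 0
  linear_combination h

include hD in
lemma EQS (mm n k : ℤ) :
    (2:ℂ) * (((mm:ℂ) - n) * Av D (mm+n) k) =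
      ((k:ℂ) - 2*n) * Av D mm (k-n) + (2*(mm:ℂ) - k) * Av D n (k-mm) := by
  have h := hD (Lb mm) (Lb n)
  rw [br_LL, map_add, map_smul, map_smul] at h
  have h2 := DFunLike.congr_fun h (some k)
  simp only [Finsupp.smul_apply, Finsupp.add_apply, smul_eq_mul] at h2
  rw [brr_some, brl_some] at h2
  have hu : D Cb (some k) = 0 := hU D hD k
  rw [hu] at h2
  simp only [smul_eq_mul, mul_zero, add_zero] at h2
  simp only [Av]
  linear_combination h2

include hD in
lemma EQC (mm n : ℤ) :
    (2:ℂ) * (((mm:ℂ) - n) * Bv D (mm+n) +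
        (if mm + n = 0 then ((mm:ℂ)^3 - mm)/12 else 0) * Vv D) =
      ((n:ℂ) - (n:ℂ)^3)/12 * Av D mm (-n) + ((mm:ℂ)^3 - mm)/12 * Av D n (-mm) := by
  have h := hD (Lb mm) (Lb n)
  rw [br_LL, map_add, map_smul, map_smul] at h
  have h2 := DFunLike.congr_fun h none
  simp only [Finsupp.smul_apply, Finsupp.add_apply, smul_eq_mul] at h2
  rw [brr_none, brl_none] at h2
  simp only [Av, Bv, Vv]
  linear_combination h2

include hD in
lemma P1 (n k : ℤ) (hn : n ≠ 0) (hk : k ≠ 2*n) : Av D n k = Av D 0 (k-n) := by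
  have h := EQS D hD 0 n k
  simp only [zero_add, sub_zero, Int.cast_zero] at h
  have hkc : ((k:ℂ) - 2*n) ≠ 0 :=
    sub_ne_zero.mpr (fun h' => hk (by exact_mod_cast h'))
  apply mul_left_cancel₀ hkc
  linear_combination h

include hD in
lemma P2 (n : ℤ) (hn : n ≠ 0) :
    (2:ℂ) * ((0 - (n:ℂ)) * Bv D n) = ((n:ℂ) - (n:ℂ)^3)/12 * Av D 0 (-n) := by
  have h := EQC D hD 0 n
  rw [if_neg (by omega : ¬ (0 + n = 0))] at h
  simp only [zero_add, Int.cast_zero, neg_zero] at h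
  linear_combination h

include hD in
lemma P3 (t : ℤ) (ht : t ≠ 0) : Av D 0 t = 0 := by
  have e1 := EQC D hD (3*t) (-4*t)
  rw [show 3*t + -4*t = -t from by ring, if_neg (by omega : ¬ (-t = 0))] at e1
  have r1 : Av D (3*t) (-(-4*t)) = Av D 0 t := by
    rw [show -(-4*t) = 4*t from by ring,
      P1 D hD (3*t) (4*t) (by omega) (by omega),
      show 4*t - 3*t = t from by ring]
  have r2 : Av D (-4*t) (-(3*t)) = Av D 0 t := by
    rw [show -(3*t) = -3*t from by ring,
      P1 D hD (-4*t) (-3*t) (by omega) (by omega),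
      show -3*t - -4*t = t from by ring]
  rw [r1, r2] at e1
  have e2 := P2 D hD (-t) (by omega)
  rw [show -(-t) = t from by ring] at e2
  push_cast at e1 e2
  have h7 : (7:ℂ) * (t:ℂ)^3 * Av D 0 t = 0 := by linear_combination 7*e2 - e1
  have ht3 : (7:ℂ) * (t:ℂ)^3 ≠ 0 :=
    mul_ne_zero (by norm_num) (pow_ne_zero _ (Int.cast_ne_zero.mpr ht))
  exact (mul_eq_zero.mp h7).resolve_left ht3

include hD in
lemma P6 (n k : ℤ) : Av D n k = if k = n then Av D 0 0 else 0 := by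
  by_cases hn : n = 0
  · subst hn
    by_cases hk : k = 0
    · subst hk; simp
    · rw [P3 D hD k hk, if_neg hk]
  · by_cases hk2 : k = 2*n
    · subst hk2
      rw [if_neg (by omega)]
      have e := EQS D hD (2*n) (-n) (2*n)
      rw [show 2*n + -n = n from by ring, show 2*n - -n = 3*n from by ring,
        show 2*n - 2*n = 0 from by ring] at e
      have r1 : Av D (2*n) (3*n) = 0 := by
        rw [P1 D hD (2*n) (3*n) (by omega) (by omega),
          show 3*n - 2*n = n from by ring, P3 D hD n hn]
      have r2 : Av D (-n) 0 = 0 := by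
        rw [P1 D hD (-n) 0 (by omega) (by omega),
          show (0:ℤ) - -n = n from by ring, P3 D hD n hn]
      rw [r1, r2] at e
      push_cast at e
      have h6 : (6:ℂ) * (n:ℂ) * Av D n (2*n) = 0 := by linear_combination e
      have hn6 : (6:ℂ) * (n:ℂ) ≠ 0 :=
        mul_ne_zero (by norm_num) (Int.cast_ne_zero.mpr hn)
      exact (mul_eq_zero.mp h6).resolve_left hn6
    · rw [P1 D hD n k hn hk2]
      by_cases hkn : k = n
      · subst hkn; simp
      · rw [P3 D hD (k - n) (by omega), if_neg hkn]

include hD in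
lemma PB (n : ℤ) : Bv D n = 0 := by
  by_cases hn : n = 0
  · subst hn
    have e := EQC D hD 1 (-1)
    rw [show (1:ℤ) + -1 = 0 from by ring, if_pos rfl] at e
    push_cast at e
    linear_combination e / 4
  · have h := P2 D hD n hn
    rw [P3 D hD (-n) (by omega), mul_zero] at h
    have hnc : (n:ℂ) ≠ 0 := Int.cast_ne_zero.mpr hn
    have : (-2:ℂ) * n * Bv D n = 0 := by linear_combination h
    have h2 : (-2:ℂ) * (n:ℂ) ≠ 0 := mul_ne_zero (by norm_num) hnc
    exact (mul_eq_zero.mp this).resolve_left h2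

include hD in
lemma PV : Vv D = Av D 0 0 := by
  have e := EQC D hD 2 (-2)
  rw [show (2:ℤ) + -2 = 0 from by ring, if_pos rfl] at e
  have r1 : Av D 2 (-(-2)) = Av D 0 0 := by
    rw [P6 D hD]; norm_num
  have r2 : Av D (-2) (-2) = Av D 0 0 := by
    rw [P6 D hD]; norm_num
  rw [r1, r2, PB D hD 0] at e
  push_cast at e
  linear_combination e

include hD in
lemma halfDeriv_scalar : ∀ w : Vir, D w = (Av D 0 0) • w := by
  have hL : ∀ n : ℤ, D (Lb n) = (Av D 0 0) • Lb n := by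
    intro n
    apply Finsupp.ext; intro p
    cases p with
    | none =>
      show Bv D n = (Av D 0 0 • Lb n) none
      rw [PB D hD n, Finsupp.smul_apply,
        show (Lb n) none = (0:ℂ) from by simp [Lb], smul_zero]
    | some k =>
      show Av D n k = (Av D 0 0 • Lb n) (some k)
      rw [P6 D hD n k, Finsupp.smul_apply,
        show (Lb n) (some k) = (if k = n then (1:ℂ) else 0) from by
          simp [Lb, Finsupp.single_apply, eq_comm], smul_eq_mul]
      by_cases hkn : k = n <;> simp [hkn]
  have hC : D Cb = (Av D 0 0) • Cb := by
    apply Finsupp.ext; intro p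
    cases p with
    | none =>
      show Vv D = (Av D 0 0 • Cb) none
      rw [PV D hD, Finsupp.smul_apply,
        show Cb none = (1:ℂ) from by simp [Cb], smul_eq_mul, mul_one]
    | some k =>
      show Uv D k = (Av D 0 0 • Cb) (some k)
      rw [hU D hD k, Finsupp.smul_apply,
        show Cb (some k) = (0:ℂ) from by simp [Cb], smul_zero]
  have hsingle : ∀ (p : Option ℤ) (c : ℂ),
      D (Finsupp.single p c) = (Av D 0 0) • Finsupp.single p c := by
    intro p c
    have h1 : Finsupp.single p c = c • Finsupp.single p (1:ℂ) := by
      rw [Finsupp.smul_single, smul_eq_mul, mul_one]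
    rw [h1, map_smul]
    cases p with
    | none =>
      rw [show Finsupp.single (none : Option ℤ) (1:ℂ) = Cb from rfl, hC, smul_comm]
    | some n =>
      rw [show Finsupp.single (some n) (1:ℂ) = Lb n from rfl, hL, smul_comm]
  intro w
  induction w using Finsupp.induction_linear with
  | zero => simp
  | add f g hf hg => rw [map_add, hf, hg, smul_add]
  | single p c => exact hsingle p c

end HalfDeriv

/-- There are no non-trivial transposed Poisson algebra
structures on the Virasoro algebra. -/
theorem no_transposedPoisson_on_virasoro
    (m : Vir →ₗ[ℂ] Vir →ₗ[ℂ] Vir)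
    (hcomm : ∀ x y : Vir, m x y = m y x)
    (hassoc : ∀ x y z : Vir, m (m x y) z = m x (m y z))
    (hcompat : ∀ x y z : Vir, (2 : ℂ) • m z (virBracket x y) =
        virBracket (m z x) y + virBracket x (m z y)) :
    m = 0 := by
  have key : ∀ z : Vir, ∀ w : Vir, m z w = (Av (m z) 0 0) • w := by
    intro z
    exact halfDeriv_scalar (m z) (fun x y => hcompat x y z)
  set lam : Vir → ℂ := fun z => Av (m z) 0 0 with hlamdef
  have hlam : ∀ z w : Vir, m z w = lam z • w := key
  have h1 : lam (Lb 0) = 0 := by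
    have h := hcomm (Lb 0) (Lb 1)
    rw [hlam (Lb 0) (Lb 1), hlam (Lb 1) (Lb 0)] at h
    have h2 := DFunLike.congr_fun h (some 1)
    simpa [Lb, Finsupp.single_apply] using h2
  have hz : ∀ z, lam z = 0 := by
    intro z
    have h := hcomm z (Lb 0)
    rw [hlam z (Lb 0), hlam (Lb 0) z, h1, zero_smul] at h
    have h2 := DFunLike.congr_fun h (some 0)
    simpa [Lb, Finsupp.single_apply] using h2
  apply LinearMap.ext; intro z
  apply LinearMap.ext; intro w
  rw [LinearMap.zero_apply, LinearMap.zero_apply, hlam z w, hz, zero_smul]
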